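/- (Generalized Zeckendorf theorem) For every integer k ≥ 1 and every n ≥ 0, there exists a unique finite set D ⊆ ℕ such that |p − q| ≥ k for all distinct p, q ∈ D and Σ_{p∈D} A_{k,p} = n. -/
import Mathlib


/-- The Fibonacci-like sequence `A_{k,p}` : `A k p = p+1` for `p < k`,
and `A k p = A k (p-1) + A k (p-k)` for `p ≥ k`.
(The `max k 1` only makes termination evident; in all statements `k ≥ 1`.) -/
def A (k : ℕ) : ℕ → ℕ
  | 0 => 1
  | p + 1 => if p + 1 < k then p + 2 else A k p + A k (p + 1 - max k 1)
termination_by p => p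
decreasing_by all_goals omega

/-- `D` is a canonical `k`-decomposition of `n` : distinct elements are at
distance at least `k`, and the corresponding `A`-numbers sum to `n`. -/
def IsCanonDecomp (k n : ℕ) (D : Finset ℕ) : Prop :=
  (∀ p ∈ D, ∀ q ∈ D, p ≠ q → k ≤ Nat.dist p q) ∧ ∑ p ∈ D, A k p = n

lemma A_zero (k : ℕ) : A k 0 = 1 := by simp [A]

lemma A_succ (k : ℕ) (hk : 1 ≤ k) (p : ℕ) :
    A k (p + 1) = A k p + A k (p + 1 - k) := by
  rw [A]
  have hmax : max k 1 = k := by omega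
  by_cases h : p + 1 < k
  · have h0 : p + 1 - k = 0 := by omega
    have hp : A k p = p + 1 := by
      cases p with
      | zero => simp [A]
      | succ q => rw [A]; simp [Nat.lt_of_succ_lt h]
    rw [if_pos h, h0, A_zero, hp]
  · rw [if_neg h, hmax]

lemma A_pos (k : ℕ) (hk : 1 ≤ k) (p : ℕ) : 0 < A k p := by
  induction p with
  | zero => simp [A_zero]
  | succ q ih => rw [A_succ k hk]; omega

lemma A_strictMono (k : ℕ) (hk : 1 ≤ k) : StrictMono (A k) := by
  apply strictMono_nat_of_lt_succ
  intro p
  rw [A_succ k hk]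
  have := A_pos k hk (p + 1 - k)
  omega

lemma dist_eq (p q : ℕ) : Nat.dist p q = p - q + (q - p) := rfl

/-- Key bound: a gapped set with elements `< m` sums to less than `A k m`. -/
lemma sum_lt (k : ℕ) (hk : 1 ≤ k) :
    ∀ m : ℕ, ∀ D : Finset ℕ,
      (∀ p ∈ D, ∀ q ∈ D, p ≠ q → k ≤ Nat.dist p q) →
      (∀ p ∈ D, p < m) → ∑ p ∈ D, A k p < A k m := by
  intro m
  induction m using Nat.strong_induction_on with
  | _ m ih =>
    intro D hgap hlt
    rcases D.eq_empty_or_nonempty with rfl | hne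
    · simpa using A_pos k hk m
    · set p := D.max' hne with hp
      have hpD : p ∈ D := D.max'_mem hne
      have hpm : p < m := hlt p hpD
      have hD' : ∀ q ∈ D.erase p, q < p + 1 - k := by
        intro q hq
        have hqD := Finset.mem_of_mem_erase hq
        have hqp : q ≠ p := Finset.ne_of_mem_erase hq
        have hle : q ≤ p := D.le_max' q hqD
        have hd := hgap q hqD p hpD hqp
        rw [dist_eq] at hd
        omega
      have hgap' : ∀ a ∈ D.erase p, ∀ b ∈ D.erase p, a ≠ b → k ≤ Nat.dist a b := by
        intro a ha b hb hab
        exact hgap a (Finset.mem_of_mem_erase ha) b (Finset.mem_of_mem_erase hb) hab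
      have h1 : ∑ q ∈ D.erase p, A k q < A k (p + 1 - k) :=
        ih (p + 1 - k) (by omega) (D.erase p) hgap' hD'
      have hsum : A k p + ∑ q ∈ D.erase p, A k q = ∑ q ∈ D, A k q :=
        Finset.add_sum_erase D (A k) hpD
      have h2 : ∑ q ∈ D, A k q < A k (p + 1) := by
        rw [A_succ k hk]; omega
      have h3 : A k (p + 1) ≤ A k m := (A_strictMono k hk).le_iff_le.mpr (by omega)
      omega

lemma A_ge (k : ℕ) (hk : 1 ≤ k) (p : ℕ) : p + 1 ≤ A k p := by
  induction p with
  | zero => simp [A_zero]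
  | succ q ih =>
    rw [A_succ k hk]
    have := A_pos k hk (q + 1 - k)
    omega

lemma exists_decomp (k : ℕ) (hk : 1 ≤ k) :
    ∀ n : ℕ, ∃ D : Finset ℕ, IsCanonDecomp k n D ∧ ∀ q ∈ D, A k q ≤ n := by
  intro n
  induction n using Nat.strong_induction_on with
  | _ n ih =>
    rcases Nat.eq_zero_or_pos n with rfl | hn
    · exact ⟨∅, ⟨by simp, by simp⟩, by simp⟩
    · have hex : ∃ m, n < A k m := ⟨n, by have := A_ge k hk n; omega⟩
      set m := Nat.find hex with hm
      have hlt : n < A k m := Nat.find_spec hex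
      have hm0 : 0 < m := by
        rcases Nat.eq_zero_or_pos m with h0 | h
        · rw [h0, A_zero] at hlt; omega
        · exact h
      set p := m - 1 with hpdef
      have hple : A k p ≤ n := by
        have := Nat.find_min hex (show p < m by omega)
        omega
      have hmp : m = p + 1 := by omega
      have hub : n < A k p + A k (p + 1 - k) := by
        rw [← A_succ k hk, ← hmp]; exact hlt
      set r := n - A k p with hr
      have hApos := A_pos k hk p
      have hrn : r < n := by omega
      obtain ⟨D', ⟨hgap', hsum'⟩, hbd'⟩ := ih r hrn
      have hsmall : ∀ q ∈ D', q < p + 1 - k := by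
        intro q hq
        have h1 : A k q ≤ r := hbd' q hq
        have h2 : A k q < A k (p + 1 - k) := by omega
        exact (A_strictMono k hk).lt_iff_lt.mp h2
      have hpD' : p ∉ D' := by
        intro h
        have := hsmall p h
        omega
      refine ⟨insert p D', ⟨?_, ?_⟩, ?_⟩
      · intro a ha b hb hab
        rcases Finset.mem_insert.mp ha with rfl | ha' <;>
          rcases Finset.mem_insert.mp hb with rfl | hb'
        · omega
        · have := hsmall b hb'; rw [dist_eq]; omega
        · have := hsmall a ha'; rw [dist_eq]; omega
        · exact hgap' a ha' b hb' hab
      · rw [Finset.sum_insert hpD', hsum']; omega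
      · intro q hq
        rcases Finset.mem_insert.mp hq with rfl | hq'
        · exact hple
        · have := hbd' q hq'; omega

lemma unique_decomp (k : ℕ) (hk : 1 ≤ k) :
    ∀ n : ℕ, ∀ D E : Finset ℕ, IsCanonDecomp k n D → IsCanonDecomp k n E → D = E := by
  intro n
  induction n using Nat.strong_induction_on with
  | _ n ih =>
    intro D E ⟨hgD, hsD⟩ ⟨hgE, hsE⟩
    have hmax : ∀ F : Finset ℕ, (∀ p ∈ F, ∀ q ∈ F, p ≠ q → k ≤ Nat.dist p q) →
        (∑ p ∈ F, A k p = n) → ∀ (h : F.Nonempty),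
        A k (F.max' h) ≤ n ∧ n < A k (F.max' h + 1) := by
      intro F hg hs h
      constructor
      · rw [← hs]
        exact Finset.single_le_sum (fun q _ => Nat.zero_le _) (F.max'_mem h)
      · rw [← hs]
        exact sum_lt k hk (F.max' h + 1) F hg
          (fun q hq => Nat.lt_succ_of_le (F.le_max' q hq))
    rcases D.eq_empty_or_nonempty with rfl | hneD
    · rcases E.eq_empty_or_nonempty with rfl | hneE
      · rfl
      · exfalso
        have hn : n = 0 := by simp at hsD; omega
        have h1 : A k (E.max' hneE) ≤ n := (hmax E hgE hsE hneE).1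
        have := A_pos k hk (E.max' hneE)
        omega
    · rcases E.eq_empty_or_nonempty with rfl | hneE
      · exfalso
        have hn : n = 0 := by simp at hsE; omega
        have h1 : A k (D.max' hneD) ≤ n := (hmax D hgD hsD hneD).1
        have := A_pos k hk (D.max' hneD)
        omega
      · obtain ⟨hD1, hD2⟩ := hmax D hgD hsD hneD
        obtain ⟨hE1, hE2⟩ := hmax E hgE hsE hneE
        set p := D.max' hneD with hpdef
        set q := E.max' hneE with hqdef
        have hpq : p = q := by
          have h1 : p < q + 1 := (A_strictMono k hk).lt_iff_lt.mp (by omega)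
          have h2 : q < p + 1 := (A_strictMono k hk).lt_iff_lt.mp (by omega)
          omega
        have hpD : p ∈ D := D.max'_mem hneD
        have hqE : q ∈ E := E.max'_mem hneE
        have hApos := A_pos k hk p
        set r := n - A k p with hr
        have hrn : r < n := by omega
        have hgapD : ∀ a ∈ D.erase p, ∀ b ∈ D.erase p, a ≠ b → k ≤ Nat.dist a b :=
          fun a ha b hb hab =>
            hgD a (Finset.mem_of_mem_erase ha) b (Finset.mem_of_mem_erase hb) hab
        have hgapE : ∀ a ∈ E.erase p, ∀ b ∈ E.erase p, a ≠ b → k ≤ Nat.dist a b :=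
          fun a ha b hb hab =>
            hgE a (Finset.mem_of_mem_erase ha) b (Finset.mem_of_mem_erase hb) hab
        have hsD' : ∑ x ∈ D.erase p, A k x = r := by
          have := Finset.add_sum_erase D (A k) hpD
          omega
        have hsE' : ∑ x ∈ E.erase p, A k x = r := by
          have := Finset.add_sum_erase E (A k) (hpq ▸ hqE)
          omega
        have heq : D.erase p = E.erase p :=
          ih r hrn _ _ ⟨hgapD, hsD'⟩ ⟨hgapE, hsE'⟩
        have h1 : insert p (D.erase p) = D := Finset.insert_erase hpD
        have h2 : insert p (E.erase p) = E := Finset.insert_erase (hpq ▸ hqE)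
        rw [← h1, ← h2, heq]

/-- Generalized Zeckendorf theorem: every `n` has a unique canonical
`k`-decomposition. -/
theorem zeckendorf_generalized (k : ℕ) (hk : 1 ≤ k) (n : ℕ) :
    ∃! D : Finset ℕ, IsCanonDecomp k n D := by
  obtain ⟨D, hD, -⟩ := exists_decomp k hk n
  exact ⟨D, hD, fun E hE => unique_decomp k hk n E D hE hD⟩
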